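/- Fix ν_s > 0 and let 0 < ν_d ≤ ν_d′ be such that ĉₑ(ν_d,ν_s) + b̂ₑ(ν_d) > 0. Then ĉₑ(ν_d′,ν_s) + b̂ₑ(ν_d′) > 0 and b̂ₑ(ν_d′)/(ĉₑ(ν_d′,ν_s) + b̂ₑ(ν_d′)) ≤ b̂ₑ(ν_d)/(ĉₑ(ν_d,ν_s) + b̂ₑ(ν_d)); i.e., the ratio b̂ₑ/(ĉₑ + b̂ₑ) is monotonically decreasing in the true decoy intensity ν_d on the region where ĉₑ + b̂ₑ is positive. -/

import Mathlib

/-- Estimate `b̂ₑ` with true decoy intensity `νd` and assumed decoy intensity `μd`. -/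
noncomputable def bE (α s p₀ μd νd : ℝ) : ℝ :=
  ((s * (1 - Real.exp (-α * νd)) + p₀ / 2) * Real.exp μd - p₀ / 2) / μd

/-- Estimate `ĉₑ` with true intensities `νd, νs` and assumed intensities `μd, μs`. -/
noncomputable def cE (α s p₀ μd μs νd νs : ℝ) : ℝ :=
  (μs ^ 2 * Real.exp μd * ((1 - s) * (1 - Real.exp (-α * νd)) + (p₀ / 2) * (1 - Real.exp (-μd)))
    - μd ^ 2 * Real.exp μs * ((1 - s) * (1 - Real.exp (-α * νs)) + (p₀ / 2) * (1 - Real.exp (-μs))))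
  / (μd * μs * (μs - μd))

private lemma key_affine (A B C D x x' : ℝ) (hA : 0 ≤ A) (hC : 0 < C) (hxx : x ≤ x')
    (hAD : A * D ≤ B * C) (hden : 0 < (A + C) * x + (B + D)) :
    0 < (A + C) * x' + (B + D) ∧
    (A * x' + B) / ((A + C) * x' + (B + D)) ≤ (A * x + B) / ((A + C) * x + (B + D)) := by
  have hden' : 0 < (A + C) * x' + (B + D) := by nlinarith
  refine ⟨hden', ?_⟩
  rw [div_le_div_iff₀ hden' hden]
  nlinarith [mul_nonneg (sub_nonneg.2 hxx) (sub_nonneg.2 hAD)]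

set_option maxHeartbeats 1000000 in
theorem stmt14 (α s p₀ μd μs νs νd νd' : ℝ)
    (hα : 0 < α) (hα1 : α ≤ 1) (hs0 : 0 ≤ s) (hs : s < 1 / 2) (hp : 0 < p₀)
    (hμd : 0 < μd) (hμ : μd < μs) (hνs : 0 < νs)
    (hνd : 0 < νd) (hνd' : νd ≤ νd')
    (hpos : 0 < cE α s p₀ μd μs νd νs + bE α s p₀ μd νd) :
    0 < cE α s p₀ μd μs νd' νs + bE α s p₀ μd νd' ∧
    bE α s p₀ μd νd' / (cE α s p₀ μd μs νd' νs + bE α s p₀ μd νd')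
      ≤ bE α s p₀ μd νd / (cE α s p₀ μd μs νd νs + bE α s p₀ μd νd) := by
  have hμs : 0 < μs := hμd.trans hμ
  have hsd : 0 < μs - μd := sub_pos.2 hμ
  have hEd : 1 < Real.exp μd := by nlinarith [Real.add_one_le_exp μd]
  have hEd0 : (0:ℝ) < Real.exp μd := Real.exp_pos _
  have hEs0 : (0:ℝ) < Real.exp μs := Real.exp_pos _
  set A : ℝ := s * Real.exp μd / μd with hAdef
  set B : ℝ := (p₀ / 2) * (Real.exp μd - 1) / μd with hBdef
  set C : ℝ := μs * Real.exp μd * (1 - s) / (μd * (μs - μd)) with hCdef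
  set Ts : ℝ := (1 - s) * (1 - Real.exp (-α * νs)) + (p₀ / 2) * (1 - Real.exp (-μs)) with hTsdef
  set D : ℝ := (μs ^ 2 * (p₀ / 2) * (Real.exp μd - 1) - μd ^ 2 * Real.exp μs * Ts)
      / (μd * μs * (μs - μd)) with hDdef
  clear_value A B C D Ts
  have hexp : Real.exp (-μd) = (Real.exp μd)⁻¹ := Real.exp_neg μd
  have hbE : ∀ ν : ℝ, bE α s p₀ μd ν = A * (1 - Real.exp (-α * ν)) + B := by
    intro ν
    rw [bE, hAdef, hBdef]
    field_simp
    ring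
  have hcE : ∀ ν : ℝ, cE α s p₀ μd μs ν νs = C * (1 - Real.exp (-α * ν)) + D := by
    intro ν
    rw [cE, hCdef, hDdef, hTsdef, hexp]
    field_simp
    ring
  have hA : 0 ≤ A := by rw [hAdef]; positivity
  have hC : 0 < C := by
    rw [hCdef]
    apply div_pos _ (by positivity)
    have : 0 < 1 - s := by linarith
    positivity
  have hys : 0 ≤ 1 - Real.exp (-α * νs) := by
    have : Real.exp (-α * νs) ≤ 1 := by
      rw [Real.exp_le_one_iff]
      nlinarith
    linarith
  have hTs : 0 ≤ Ts := by
    have h1 : Real.exp (-μs) ≤ 1 := by rw [Real.exp_le_one_iff]; linarith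
    have h2 : (0:ℝ) ≤ 1 - s := by linarith
    have h3 : (0:ℝ) ≤ p₀ / 2 := by positivity
    rw [hTsdef]
    nlinarith [mul_nonneg h2 hys, mul_nonneg h3 (sub_nonneg.2 h1)]
  have hAD : A * D ≤ B * C := by
    have h1 : (0:ℝ) ≤ 1 - 2 * s := by linarith
    have h2 : (0:ℝ) ≤ Real.exp μd - 1 := by linarith
    have core : s * (μs ^ 2 * (p₀ / 2) * (Real.exp μd - 1) - μd ^ 2 * Real.exp μs * Ts)
        ≤ (p₀ / 2) * (Real.exp μd - 1) * μs ^ 2 * (1 - s) := by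
      have t1 : 0 ≤ s * μd ^ 2 * Real.exp μs * Ts :=
        mul_nonneg (mul_nonneg (mul_nonneg hs0 (sq_nonneg μd)) hEs0.le) hTs
      have t2 : 0 ≤ p₀ / 2 * (Real.exp μd - 1) * μs ^ 2 * (1 - 2 * s) :=
        mul_nonneg (mul_nonneg (mul_nonneg (by positivity : (0:ℝ) ≤ p₀ / 2) h2) (sq_nonneg μs)) h1
      nlinarith [t1, t2]
    have hq : (0:ℝ) < Real.exp μd / (μd ^ 2 * μs * (μs - μd)) := by positivity
    have e1 : A * D = s * (μs ^ 2 * (p₀ / 2) * (Real.exp μd - 1) - μd ^ 2 * Real.exp μs * Ts)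
        * (Real.exp μd / (μd ^ 2 * μs * (μs - μd))) := by
      rw [hAdef, hDdef]; field_simp
    have e2 : B * C = (p₀ / 2) * (Real.exp μd - 1) * μs ^ 2 * (1 - s)
        * (Real.exp μd / (μd ^ 2 * μs * (μs - μd))) := by
      rw [hBdef, hCdef]; field_simp
    rw [e1, e2]
    exact mul_le_mul_of_nonneg_right core hq.le
  have hxx : 1 - Real.exp (-α * νd) ≤ 1 - Real.exp (-α * νd') := by
    have : Real.exp (-α * νd') ≤ Real.exp (-α * νd) := by
      apply Real.exp_le_exp.mpr; nlinarith
    linarith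
  have hden : 0 < (A + C) * (1 - Real.exp (-α * νd)) + (B + D) := by
    have := hpos
    rw [hcE νd, hbE νd] at this
    linarith
  obtain ⟨h1, h2⟩ := key_affine A B C D (1 - Real.exp (-α * νd)) (1 - Real.exp (-α * νd'))
    hA hC hxx hAD hden
  rw [hcE νd, hbE νd, hcE νd', hbE νd']
  constructor
  · linarith
  · calc (A * (1 - Real.exp (-α * νd')) + B) /
        (C * (1 - Real.exp (-α * νd')) + D + (A * (1 - Real.exp (-α * νd')) + B))
        = (A * (1 - Real.exp (-α * νd')) + B) /
          ((A + C) * (1 - Real.exp (-α * νd')) + (B + D)) := by ring_nf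
    _ ≤ (A * (1 - Real.exp (-α * νd)) + B) /
          ((A + C) * (1 - Real.exp (-α * νd)) + (B + D)) := h2
    _ = (A * (1 - Real.exp (-α * νd)) + B) /
          (C * (1 - Real.exp (-α * νd)) + D + (A * (1 - Real.exp (-α * νd)) + B)) := by ring_nf
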